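/- Let n ≥ 2 and r ≥ 1 be integers and let f = x^{2n+3}z − x^r y² − y²z, so that S(f) = {(2n+3,0,1), (r,2,0), (0,2,1)} ⊂ ℤ³. Then the intersection of the tropical variety 𝒯(f) with the nonnegative octant ℝ³_{≥0} equals the union of the three two-dimensional cones ⟨(2,2n+3,0),(2,2n+3,2r)⟩ ∪ ⟨(1,0,r),(2,2n+3,2r)⟩ ∪ ⟨(0,1,2),(2,2n+3,2r)⟩; in particular, for u = (2,2n+3,2r) the three inner products ⟨u,a⟩, a ∈ S(f), are all equal. -/

import Mathlib

open scoped BigOperators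

/-- The real-coordinate vector attached to an integer vector. -/
def toR {n : ℕ} (u : Fin n → ℤ) : Fin n → ℝ := fun j => (u j : ℝ)

/-- The rational polyhedral cone generated by integer vectors `v 0, …, v (r-1)`:
all nonnegative real linear combinations of the generators. -/
def coneOf {n r : ℕ} (v : Fin r → (Fin n → ℤ)) : Set (Fin n → ℝ) :=
  { x | ∃ c : Fin r → ℝ, (∀ i, 0 ≤ c i) ∧ x = ∑ i, c i • toR (v i) }

/-- The standard inner product of `u ∈ ℝ³` with an integer exponent vector `a ∈ ℤ³`. -/
def dotZR (u : Fin 3 → ℝ) (a : Fin 3 → ℤ) : ℝ := ∑ j, u j * (a j : ℝ)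

/-- The tropical variety of a polynomial with exponent set `A ⊂ ℤ³`: the set of `u ∈ ℝ³`
for which the minimum of `⟨u,a⟩` over `a ∈ A` is attained by at least two distinct
elements of `A`. -/
def tropicalVar (A : Set (Fin 3 → ℤ)) : Set (Fin 3 → ℝ) :=
  { u | ∃ a ∈ A, ∃ b ∈ A, a ≠ b ∧ dotZR u a = dotZR u b ∧ ∀ c ∈ A, dotZR u a ≤ dotZR u c }

lemma mem_coneOf2 {v w : Fin 3 → ℤ} {p : Fin 3 → ℝ} (s t : ℝ)
    (hs : 0 ≤ s) (ht : 0 ≤ t)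
    (hp : ∀ j, p j = s * (v j : ℝ) + t * (w j : ℝ)) :
    p ∈ coneOf ![v, w] := by
  refine ⟨![s, t], ?_, ?_⟩
  · intro i; fin_cases i <;> simpa
  · funext j
    simp [Fin.sum_univ_two, toR, hp j]

lemma coneOf2_elim {v w : Fin 3 → ℤ} {p : Fin 3 → ℝ}
    (h : p ∈ coneOf ![v, w]) :
    ∃ s t : ℝ, 0 ≤ s ∧ 0 ≤ t ∧ ∀ j, p j = s * (v j : ℝ) + t * (w j : ℝ) := by
  obtain ⟨c, hc, hx⟩ := h
  refine ⟨c 0, c 1, hc 0, hc 1, fun j => ?_⟩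
  rw [hx]
  simp [Fin.sum_univ_two, toR]

lemma dotD1 (n : ℤ) (p : Fin 3 → ℝ) :
    dotZR p ![2*n+3, 0, 1] = p 0 * (2*(n:ℝ)+3) + p 2 := by
  simp [dotZR, Fin.sum_univ_three]

lemma dotD2 (r : ℤ) (p : Fin 3 → ℝ) :
    dotZR p ![r, 2, 0] = p 0 * (r:ℝ) + 2 * p 1 := by
  simp [dotZR, Fin.sum_univ_three]; ring

lemma dotD3 (p : Fin 3 → ℝ) :
    dotZR p ![0, 2, 1] = 2 * p 1 + p 2 := by
  simp [dotZR, Fin.sum_univ_three]; ring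


lemma C1_iff (n r : ℤ) (hn : 2 ≤ n) (hr : 1 ≤ r) (p : Fin 3 → ℝ) :
    p ∈ coneOf ![![2, 2*n+3, 0], ![2, 2*n+3, 2*r]] ↔
      (2 * p 1 = (2*(n:ℝ)+3) * p 0 ∧ 0 ≤ p 2 ∧ p 2 ≤ (r:ℝ) * p 0) := by
  have hR : (1:ℝ) ≤ (r:ℝ) := by exact_mod_cast hr
  have hr' : (0:ℝ) ≤ (r:ℝ) := by linarith
  have hr0 : (r:ℝ) ≠ 0 := by linarith
  constructor
  · intro h
    obtain ⟨s, t, hs, ht, hp⟩ := coneOf2_elim h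
    have e0 := hp 0; have e1 := hp 1; have e2 := hp 2
    simp at e0 e1 e2
    push_cast at e0 e1 e2
    have k1 : 2 * p 1 = (2*(n:ℝ)+3) * p 0 := by linear_combination 2*e1 - (2*(n:ℝ)+3)*e0
    have k2 : (r:ℝ) * p 0 - p 2 = 2*(r:ℝ)*s := by linear_combination (r:ℝ)*e0 - e2
    have k4 : 0 ≤ (r:ℝ)*s := mul_nonneg hr' hs
    have k5 : 0 ≤ (r:ℝ)*t := mul_nonneg hr' ht
    refine ⟨k1, by linarith, by linarith⟩
  · rintro ⟨h1, h2, h3⟩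
    refine mem_coneOf2 (((r:ℝ) * p 0 - p 2)/(2*(r:ℝ))) (p 2 / (2*(r:ℝ)))
      (div_nonneg (by linarith) (by linarith)) (div_nonneg (by linarith) (by linarith)) ?_
    intro j
    fin_cases j
    · simp; push_cast; field_simp; ring
    · simp; push_cast; field_simp; linear_combination (r:ℝ)*h1
    · simp; push_cast; field_simp

lemma C2_iff (n r : ℤ) (hn : 2 ≤ n) (hr : 1 ≤ r) (p : Fin 3 → ℝ) :
    p ∈ coneOf ![![1, 0, r], ![2, 2*n+3, 2*r]] ↔
      (0 ≤ p 1 ∧ 2 * p 1 ≤ (2*(n:ℝ)+3) * p 0 ∧ p 2 = (r:ℝ) * p 0) := by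
  have hN : (2:ℝ) ≤ (n:ℝ) := by exact_mod_cast hn
  have hR : (1:ℝ) ≤ (r:ℝ) := by exact_mod_cast hr
  have hN0 : (2*(n:ℝ)+3) ≠ 0 := by linarith
  have hN' : (0:ℝ) ≤ 2*(n:ℝ)+3 := by linarith
  constructor
  · intro h
    obtain ⟨s, t, hs, ht, hp⟩ := coneOf2_elim h
    have e0 := hp 0; have e1 := hp 1; have e2 := hp 2
    simp at e0 e1 e2
    push_cast at e0 e1 e2
    have k1 : (2*(n:ℝ)+3) * p 0 - 2 * p 1 = (2*(n:ℝ)+3)*s := by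
      linear_combination (2*(n:ℝ)+3)*e0 - 2*e1
    have k2 : p 2 = (r:ℝ) * p 0 := by linear_combination e2 - (r:ℝ)*e0
    have k3 : 0 ≤ (2*(n:ℝ)+3)*s := mul_nonneg hN' hs
    have k4 : 0 ≤ (2*(n:ℝ)+3)*t := mul_nonneg hN' ht
    refine ⟨by linarith, by linarith, k2⟩
  · rintro ⟨h1, h2, h3⟩
    refine mem_coneOf2 (((2*(n:ℝ)+3) * p 0 - 2 * p 1)/(2*(n:ℝ)+3)) (p 1 / (2*(n:ℝ)+3))
      (div_nonneg (by linarith) (by linarith)) (div_nonneg (by linarith) (by linarith)) ?_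
    intro j
    fin_cases j
    · simp; push_cast; field_simp; ring
    · simp; push_cast; field_simp
    · simp; push_cast; field_simp; linear_combination (2*(n:ℝ)+3)*h3

lemma C3_iff (n r : ℤ) (hn : 2 ≤ n) (hr : 1 ≤ r) (p : Fin 3 → ℝ) :
    p ∈ coneOf ![![0, 1, 2], ![2, 2*n+3, 2*r]] ↔
      (0 ≤ p 0 ∧ (2*(n:ℝ)+3) * p 0 ≤ 2 * p 1 ∧
        p 2 = (r:ℝ) * p 0 + 2 * p 1 - (2*(n:ℝ)+3) * p 0) := by
  have hN : (2:ℝ) ≤ (n:ℝ) := by exact_mod_cast hn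
  have hR : (1:ℝ) ≤ (r:ℝ) := by exact_mod_cast hr
  constructor
  · intro h
    obtain ⟨s, t, hs, ht, hp⟩ := coneOf2_elim h
    have e0 := hp 0; have e1 := hp 1; have e2 := hp 2
    simp at e0 e1 e2
    push_cast at e0 e1 e2
    have k1 : 2 * p 1 - (2*(n:ℝ)+3) * p 0 = 2*s := by
      linear_combination 2*e1 - (2*(n:ℝ)+3)/2*e0 - (2*(n:ℝ)+3)/2*e0
    have k2 : p 2 = (r:ℝ) * p 0 + 2 * p 1 - (2*(n:ℝ)+3) * p 0 := by
      linear_combination e2 - (r:ℝ)*e0 - 2*e1 + (2*(n:ℝ)+3)*e0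
    refine ⟨by linarith, by linarith, k2⟩
  · rintro ⟨h1, h2, h3⟩
    refine mem_coneOf2 ((2 * p 1 - (2*(n:ℝ)+3) * p 0)/2) (p 0 / 2)
      (div_nonneg (by linarith) (by norm_num)) (div_nonneg (by linarith) (by norm_num)) ?_
    intro j
    fin_cases j
    · simp
    · simp; push_cast; field_simp; ring
    · simp; push_cast; field_simp; linear_combination h3

/-- for `f = x^{2n+3}z − x^r y² − y²z` (the `B₍₂ᵣ₋₁,ₙ₎`-singularity), with
`S(f) = {(2n+3,0,1),(r,2,0),(0,2,1)}`, the intersection of the tropical variety `𝒯(f)`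
with the nonnegative octant is the union of the three two-dimensional cones
`⟨(2,2n+3,0),(2,2n+3,2r)⟩ ∪ ⟨(1,0,r),(2,2n+3,2r)⟩ ∪ ⟨(0,1,2),(2,2n+3,2r)⟩`; in
particular the three inner products of `u = (2,2n+3,2r)` with the exponents coincide. -/
theorem B_odd_tropical_variety (n r : ℤ) (hn : 2 ≤ n) (hr : 1 ≤ r) :
    let A : Set (Fin 3 → ℤ) := {![2 * n + 3, 0, 1], ![r, 2, 0], ![0, 2, 1]}
    let u : Fin 3 → ℤ := ![2, 2 * n + 3, 2 * r]
    (tropicalVar A ∩ { x | ∀ j, 0 ≤ x j } =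
      coneOf ![![2, 2 * n + 3, 0], u] ∪ coneOf ![![1, 0, r], u] ∪
        coneOf ![![0, 1, 2], u]) ∧
    dotZR (toR u) ![2 * n + 3, 0, 1] = dotZR (toR u) ![r, 2, 0] ∧
    dotZR (toR u) ![r, 2, 0] = dotZR (toR u) ![0, 2, 1] := by
  intro A u
  have hN : (2:ℝ) ≤ (n:ℝ) := by exact_mod_cast hn
  have hR : (1:ℝ) ≤ (r:ℝ) := by exact_mod_cast hr
  have hA1 : ![2 * n + 3, 0, 1] ∈ A := Or.inl rfl
  have hA2 : ![r, 2, 0] ∈ A := Or.inr (Or.inl rfl)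
  have hA3 : ![0, 2, 1] ∈ A := Or.inr (Or.inr rfl)
  have ne12 : ![2 * n + 3, 0, 1] ≠ ![r, 2, 0] := by
    intro h; have := congrFun h 1; simp at this
  have ne13 : ![2 * n + 3, 0, 1] ≠ ![0, 2, 1] := by
    intro h; have := congrFun h 1; simp at this
  have ne23 : ![r, 2, 0] ≠ ![0, 2, 1] := by
    intro h; have := congrFun h 2; simp at this
  refine ⟨?_, ?_, ?_⟩
  · ext p
    constructor
    · rintro ⟨⟨a, ha, b, hb, hab, heq, hmin⟩, hpos⟩
      show p ∈ coneOf ![![2, 2*n+3, 0], ![2, 2*n+3, 2*r]] ∪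
          coneOf ![![1, 0, r], ![2, 2*n+3, 2*r]] ∪ coneOf ![![0, 1, 2], ![2, 2*n+3, 2*r]]
      have h0 : (0:ℝ) ≤ p 0 := hpos 0
      have h1 : (0:ℝ) ≤ p 1 := hpos 1
      have h2 : (0:ℝ) ≤ p 2 := hpos 2
      have m1 := hmin _ hA1
      have m2 := hmin _ hA2
      have m3 := hmin _ hA3
      have ha' : a = ![2 * n + 3, 0, 1] ∨ a = ![r, 2, 0] ∨ a = ![0, 2, 1] := ha
      have hb' : b = ![2 * n + 3, 0, 1] ∨ b = ![r, 2, 0] ∨ b = ![0, 2, 1] := hb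
      rcases ha' with rfl | rfl | rfl <;> rcases hb' with rfl | rfl | rfl <;>
        simp only [dotD1, dotD2, dotD3] at heq m1 m2 m3
      · exact absurd rfl hab
      · -- a1 = a2 : cone C3
        exact Or.inr ((C3_iff n r hn hr p).mpr ⟨h0, by linarith, by linarith⟩)
      · -- a1 = a3 : cone C1
        exact Or.inl (Or.inl ((C1_iff n r hn hr p).mpr ⟨by linarith, h2, by linarith⟩))
      · exact Or.inr ((C3_iff n r hn hr p).mpr ⟨h0, by linarith, by linarith⟩)
      · exact absurd rfl hab
      · -- a2 = a3 : cone C2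
        exact Or.inl (Or.inr ((C2_iff n r hn hr p).mpr ⟨h1, by linarith, by linarith⟩))
      · exact Or.inl (Or.inl ((C1_iff n r hn hr p).mpr ⟨by linarith, h2, by linarith⟩))
      · exact Or.inl (Or.inr ((C2_iff n r hn hr p).mpr ⟨h1, by linarith, by linarith⟩))
      · exact absurd rfl hab
    · intro h
      have h' : (p ∈ coneOf ![![2, 2 * n + 3, 0], ![2, 2*n+3, 2*r]] ∨
          p ∈ coneOf ![![1, 0, r], ![2, 2*n+3, 2*r]]) ∨
          p ∈ coneOf ![![0, 1, 2], ![2, 2*n+3, 2*r]] := h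
      rcases h' with (h' | h') | h'
      · obtain ⟨k1, k2, k3⟩ := (C1_iff n r hn hr p).mp h'
        have h0 : (0:ℝ) ≤ p 0 := by nlinarith
        have h1 : (0:ℝ) ≤ p 1 := by nlinarith
        refine ⟨⟨_, hA1, _, hA3, ne13, ?_, ?_⟩, ?_⟩
        · simp only [dotD1, dotD3]; linarith
        · intro c hc
          have hc' : c = ![2 * n + 3, 0, 1] ∨ c = ![r, 2, 0] ∨ c = ![0, 2, 1] := hc
          rcases hc' with rfl | rfl | rfl <;> simp only [dotD1, dotD2, dotD3] <;> linarith
        · intro j; fin_cases j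
          · exact h0
          · exact h1
          · exact k2
      · obtain ⟨k1, k2, k3⟩ := (C2_iff n r hn hr p).mp h'
        have h0 : (0:ℝ) ≤ p 0 := by nlinarith
        have h2 : (0:ℝ) ≤ p 2 := by nlinarith
        refine ⟨⟨_, hA2, _, hA3, ne23, ?_, ?_⟩, ?_⟩
        · simp only [dotD2, dotD3]; linarith
        · intro c hc
          have hc' : c = ![2 * n + 3, 0, 1] ∨ c = ![r, 2, 0] ∨ c = ![0, 2, 1] := hc
          rcases hc' with rfl | rfl | rfl <;> simp only [dotD1, dotD2, dotD3] <;> linarith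
        · intro j; fin_cases j
          · exact h0
          · exact k1
          · exact h2
      · obtain ⟨k1, k2, k3⟩ := (C3_iff n r hn hr p).mp h'
        have h1 : (0:ℝ) ≤ p 1 := by nlinarith
        have h2 : (0:ℝ) ≤ p 2 := by nlinarith
        refine ⟨⟨_, hA1, _, hA2, ne12, ?_, ?_⟩, ?_⟩
        · simp only [dotD1, dotD2]; linarith
        · intro c hc
          have hc' : c = ![2 * n + 3, 0, 1] ∨ c = ![r, 2, 0] ∨ c = ![0, 2, 1] := hc
          rcases hc' with rfl | rfl | rfl <;> simp only [dotD1, dotD2, dotD3] <;> linarith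
        · intro j; fin_cases j
          · exact k1
          · exact h1
          · exact h2
  · simp [dotZR, toR, u, Fin.sum_univ_three]; push_cast; ring
  · simp [dotZR, toR, u, Fin.sum_univ_three]; push_cast; ring
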